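/- If a Boolean function f:{0,1}^n→{0,1} depends on exactly n' of its input variables, then Γ(f) ≥ n'. -/

import Mathlib

attribute [local instance] Classical.propDecidable

/-- `b'` extends the partial assignment `b`: it agrees on all non-`*` coordinates of `b`. -/
def Extends {n : ℕ} (b' b : Fin n → Option Bool) : Prop :=
  ∀ i v, b i = some v → b' i = some v

/-- A total assignment `x` extends the partial assignment `b`. -/
def TExtends {n : ℕ} (x : Fin n → Bool) (b : Fin n → Option Bool) : Prop :=
  ∀ i v, b i = some v → x i = v

/-- `b` is a certificate of `f`: `f` is constant on all total extensions of `b`. -/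
def IsCert {n : ℕ} (f : (Fin n → Bool) → Bool) (b : Fin n → Option Bool) : Prop :=
  ∀ x y, TExtends x b → TExtends y b → f x = f y

/-- `b` is a `k`-certificate of `f`: it forces `f` to the value `k`. -/
def IsKCert {n : ℕ} (f : (Fin n → Bool) → Bool) (k : Bool) (b : Fin n → Option Bool) : Prop :=
  ∀ x, TExtends x b → f x = k

/-- A certificate is minimal if no proper restriction of it is a certificate. -/
def MinCert {n : ℕ} (f : (Fin n → Bool) → Bool) (c : Fin n → Option Bool) : Prop :=
  IsCert f c ∧ ∀ c', Extends c c' → c' ≠ c → ¬ IsCert f c'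

/-- A `k`-certificate is minimal if no proper restriction of it is a `k`-certificate. -/
def MinKCert {n : ℕ} (f : (Fin n → Bool) → Bool) (k : Bool) (c : Fin n → Option Bool) : Prop :=
  IsKCert f k c ∧ ∀ c', Extends c c' → c' ≠ c → ¬ IsKCert f k c'

/-- Monotone utility function: filling in `*`'s never decreases the value. -/
def Mono {n : ℕ} (g : (Fin n → Option Bool) → ℕ) : Prop :=
  ∀ b b', Extends b' b → g b ≤ g b'

/-- Submodular utility function: marginal gains shrink under extension. -/
def Submod {n : ℕ} (g : (Fin n → Option Bool) → ℕ) : Prop :=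
  ∀ b b' (i : Fin n) (ℓ : Bool), Extends b' b → b i = none → b' i = none →
    g (Function.update b' i (some ℓ)) + g b ≤ g (Function.update b i (some ℓ)) + g b'

/-- `g` is a goal function for `f` with goal value `Q`. -/
def GoalFn {n : ℕ} (f : (Fin n → Bool) → Bool) (g : (Fin n → Option Bool) → ℕ)
    (Q : ℕ) : Prop :=
  Mono g ∧ Submod g ∧ ∀ b, g b = Q ↔ IsCert f b

/-- `g` is a `k`-goal function for `f` with goal value `Q`. -/
def KGoalFn {n : ℕ} (f : (Fin n → Bool) → Bool) (k : Bool)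
    (g : (Fin n → Option Bool) → ℕ) (Q : ℕ) : Prop :=
  Mono g ∧ Submod g ∧ (∀ b, IsKCert f k b → g b = Q) ∧ (∀ b, ¬ IsKCert f k b → g b < Q)

/-- The goal value `Γ(f)`: the minimum goal value of any goal function for `f`. -/
noncomputable def gamma {n : ℕ} (f : (Fin n → Bool) → Bool) : ℕ :=
  sInf {Q | ∃ g, GoalFn f g Q}

/-- The `k`-goal value `Γ^k(f)`. -/
noncomputable def gammaK {n : ℕ} (f : (Fin n → Bool) → Bool) (k : Bool) : ℕ :=
  sInf {Q | ∃ g, KGoalFn f k g Q}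

/-- The weight of a partial assignment: the number of non-`*` coordinates. -/
noncomputable def wt {n : ℕ} (b : Fin n → Option Bool) : ℕ :=
  (Finset.univ.filter (fun i => (b i).isSome)).card

/-- `f` depends on its `i`-th variable. -/
def DependsOnVar {n : ℕ} (f : (Fin n → Bool) → Bool) (i : Fin n) : Prop :=
  ∃ x, f (Function.update x i true) ≠ f (Function.update x i false)

section Aux

open Finset

variable {n : ℕ}

/-- Auxiliary: transitivity-style fact. -/
lemma tExtends_of_extends {n : ℕ} {x : Fin n → Bool} {b b' : Fin n → Option Bool}
    (hbb : Extends b' b) (hx : TExtends x b') : TExtends x b :=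
  fun i v hiv => hx i v (hbb i v hiv)

lemma extends_update {n : ℕ} {b : Fin n → Option Bool} {i : Fin n} (hbi : b i = none)
    (v : Option Bool) : Extends (Function.update b i v) b := by
  intro k w hk
  have hki : k ≠ i := by rintro rfl; rw [hbi] at hk; cases hk
  rwa [Function.update_of_ne hki]

lemma isCert_of_full {n : ℕ} {f : (Fin n → Bool) → Bool} {c : Fin n → Option Bool}
    (hc : ∀ k, (c k).isSome) : IsCert f c := by
  intro x y hx hy
  have : x = y := by
    funext k
    obtain ⟨w, hw⟩ := Option.isSome_iff_exists.mp (hc k)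
    rw [hx k w hw, hy k w hw]
  rw [this]

/-- Every partial assignment has value at most the goal value. -/
lemma g_le_Q {n : ℕ} {f : (Fin n → Bool) → Bool} {g : (Fin n → Option Bool) → ℕ} {Q : ℕ}
    (hg : GoalFn f g Q) (b : Fin n → Option Bool) : g b ≤ Q := by
  set c : Fin n → Option Bool := fun k => some ((b k).getD false) with hc
  have hext : Extends c b := by
    intro k w hk; simp [hc, hk]
  have hcert : IsCert f c := isCert_of_full (by intro k; simp [hc])
  have := hg.1 b c hext
  rwa [(hg.2.2 c).mpr hcert] at this

/-- The set of disagreeing pairs. -/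
noncomputable def PAll {n : ℕ} (f : (Fin n → Bool) → Bool) :
    Finset ((Fin n → Bool) × (Fin n → Bool)) :=
  Finset.univ.filter fun p => f p.1 ≠ f p.2

def BothExt {n : ℕ} (b : Fin n → Option Bool) (p : (Fin n → Bool) × (Fin n → Bool)) : Prop :=
  TExtends p.1 b ∧ TExtends p.2 b

/-- The canonical pair-counting goal function. -/
noncomputable def g0 {n : ℕ} (f : (Fin n → Bool) → Bool) (b : Fin n → Option Bool) : ℕ :=
  ((PAll f).filter fun p => ¬ BothExt b p).card

lemma g0_goalFn {n : ℕ} (f : (Fin n → Bool) → Bool) : GoalFn f (g0 f) (PAll f).card := by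
  refine ⟨?_, ?_, ?_⟩
  · -- Mono
    intro b b' hbb
    apply Finset.card_le_card
    intro p hp
    rw [Finset.mem_filter] at hp ⊢
    refine ⟨hp.1, fun hcon => hp.2 ⟨tExtends_of_extends hbb hcon.1, tExtends_of_extends hbb hcon.2⟩⟩
  · -- Submod
    intro b b' i ℓ hbb hbi hb'i
    unfold g0
    rw [Finset.card_filter, Finset.card_filter, Finset.card_filter, Finset.card_filter,
      ← Finset.sum_add_distrib, ← Finset.sum_add_distrib]
    apply Finset.sum_le_sum
    intro p _
    have h13 : BothExt (Function.update b' i (some ℓ)) p → BothExt (Function.update b i (some ℓ)) p := by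
      rintro ⟨h1, h2⟩
      have hext : Extends (Function.update b' i (some ℓ)) (Function.update b i (some ℓ)) := by
        intro k w hk
        by_cases hki : k = i
        · subst hki; rw [Function.update_self] at hk ⊢; exact hk
        · rw [Function.update_of_ne hki] at hk ⊢; exact hbb k w hk
      exact ⟨tExtends_of_extends hext h1, tExtends_of_extends hext h2⟩
    have h32 : BothExt (Function.update b i (some ℓ)) p → BothExt b p := by
      rintro ⟨h1, h2⟩
      exact ⟨tExtends_of_extends (extends_update hbi _) h1,
        tExtends_of_extends (extends_update hbi _) h2⟩
    have h42 : BothExt b' p → BothExt b p := by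
      rintro ⟨h1, h2⟩
      exact ⟨tExtends_of_extends hbb h1, tExtends_of_extends hbb h2⟩
    have hkey : BothExt (Function.update b i (some ℓ)) p → BothExt b' p →
        BothExt (Function.update b' i (some ℓ)) p := by
      rintro ⟨h1, h2⟩ ⟨h3, h4⟩
      constructor <;>
      · intro k w hk
        by_cases hki : k = i
        · subst hki
          rw [Function.update_self] at hk
          first
            | exact h1 k w (by rw [Function.update_self]; exact hk)
            | exact h2 k w (by rw [Function.update_self]; exact hk)
        · rw [Function.update_of_ne hki] at hk
          first
            | exact h3 k w hk
            | exact h4 k w hk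
    have h13' := h13
    split_ifs <;> first | omega | (exfalso; tauto)
  · -- goal value iff cert
    intro b
    constructor
    · intro hQ x y hx hy
      by_contra hne
      have hpmem : (x, y) ∈ PAll f := by simp [PAll, hne]
      have hsub : (PAll f).filter (fun p => ¬ BothExt b p) ⊆ PAll f := Finset.filter_subset _ _
      have hQ' : (PAll f).card ≤ ((PAll f).filter (fun p => ¬ BothExt b p)).card := by
        unfold g0 at hQ; omega
      have heq : (PAll f).filter (fun p => ¬ BothExt b p) = PAll f :=
        Finset.eq_of_subset_of_card_le hsub hQ'
      have : (x, y) ∈ (PAll f).filter (fun p => ¬ BothExt b p) := by rw [heq]; exact hpmem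
      rw [Finset.mem_filter] at this
      exact this.2 ⟨hx, hy⟩
    · intro hcert
      unfold g0
      congr 1
      apply Finset.filter_eq_self.mpr
      intro p hp hboth
      rw [PAll, Finset.mem_filter] at hp
      exact hp.2 (hcert p.1 p.2 hboth.1 hboth.2)

end Aux
section Aux2

variable {n : ℕ}

/-- `x` witnesses that `f` depends on `i` under the restriction `b`. -/
def Wit (f : (Fin n → Bool) → Bool) (b : Fin n → Option Bool) (i : Fin n)
    (x : Fin n → Bool) : Prop :=
  TExtends x b ∧ f (Function.update x i true) ≠ f (Function.update x i false)

/-- `f` restricted by `b` depends on `i`. -/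
def RelAt (f : (Fin n → Bool) → Bool) (b : Fin n → Option Bool) (i : Fin n) : Prop :=
  ∃ x, Wit f b i x

/-- The set of literals fixed on all witnesses of `j` under `b`. -/
noncomputable def Fx (f : (Fin n → Bool) → Bool) (b : Fin n → Option Bool) (j : Fin n) :
    Finset (Fin n × Bool) :=
  Finset.univ.filter fun p => p.1 ≠ j ∧ b p.1 = none ∧ ∀ x, Wit f b j x → x p.1 = p.2

lemma mem_Fx {f : (Fin n → Bool) → Bool} {b : Fin n → Option Bool} {j i : Fin n} {c : Bool} :
    (i, c) ∈ Fx f b j ↔ i ≠ j ∧ b i = none ∧ ∀ x, Wit f b j x → x i = c := by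
  simp [Fx]

/-- The set of free relevant variables under `b`. -/
noncomputable def Rset (f : (Fin n → Bool) → Bool) (b : Fin n → Option Bool) : Finset (Fin n) :=
  Finset.univ.filter fun i => b i = none ∧ RelAt f b i

lemma mem_Rset {f : (Fin n → Bool) → Bool} {b : Fin n → Option Bool} {i : Fin n} :
    i ∈ Rset f b ↔ b i = none ∧ RelAt f b i := by
  simp [Rset]

/-- Key exchange lemma: from a witness of `j` one can build a witness of `i`
when all witnesses of `j` are fixed at coordinate `i`. -/
lemma witA {f : (Fin n → Bool) → Bool} {b : Fin n → Option Bool} {i j : Fin n} {c : Bool}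
    (hbi : b i = none) (hbj : b j = none) (hij : i ≠ j)
    (hfix : ∀ x, Wit f b j x → x i = c) {x0 : Fin n → Bool} (hw : Wit f b j x0) :
    ∃ t, Wit f b i (Function.update x0 j t) := by
  have hx0i : x0 i = c := hfix x0 hw
  set z : Fin n → Bool := Function.update x0 i (!c) with hz
  have hzext : TExtends z b := by
    intro k v hk
    have hki : k ≠ i := by rintro rfl; rw [hbi] at hk; cases hk
    rw [hz, Function.update_of_ne hki]; exact hw.1 k v hk
  have hznw : f (Function.update z j true) = f (Function.update z j false) := by
    by_contra hne
    have := hfix z ⟨hzext, hne⟩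
    rw [hz, Function.update_self] at this
    simp at this
  -- abbreviation: F t u = f (update (update x0 j t) i u)
  have hcomm : ∀ t u, Function.update (Function.update x0 i u) j t
      = Function.update (Function.update x0 j t) i u := by
    intro t u; exact Function.update_comm hij _ _ _
  have hself : ∀ t : Bool, Function.update (Function.update x0 j t) i c
      = Function.update x0 j t := by
    intro t
    have : (Function.update x0 j t) i = c := by rw [Function.update_of_ne hij]; exact hx0i
    rw [← this, Function.update_eq_self]
  by_contra hno
  push_neg at hno
  have hext : ∀ t : Bool, TExtends (Function.update x0 j t) b := by
    intro t k v hk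
    have hkj : k ≠ j := by rintro rfl; rw [hbj] at hk; cases hk
    rw [Function.update_of_ne hkj]; exact hw.1 k v hk
  have heq : ∀ t : Bool, f (Function.update (Function.update x0 j t) i true)
      = f (Function.update (Function.update x0 j t) i false) := by
    intro t
    by_contra hne
    exact hno t ⟨hext t, hne⟩
  have heq' : ∀ t : Bool, f (Function.update (Function.update x0 j t) i c)
      = f (Function.update (Function.update x0 j t) i (!c)) := by
    intro t; cases c
    · exact (heq t).symm
    · exact heq t
  have hchain : f (Function.update x0 j true) = f (Function.update x0 j false) := by
    calc f (Function.update x0 j true)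
        = f (Function.update (Function.update x0 j true) i c) := by rw [hself]
      _ = f (Function.update (Function.update x0 j true) i (!c)) := heq' true
      _ = f (Function.update z j true) := by rw [hz, hcomm]
      _ = f (Function.update z j false) := hznw
      _ = f (Function.update (Function.update x0 j false) i (!c)) := by rw [hz, hcomm]
      _ = f (Function.update (Function.update x0 j false) i c) := (heq' false).symm
      _ = f (Function.update x0 j false) := by rw [hself]
  exact hw.2 hchain

/-- Fixed-literal transfer lemma. -/
lemma fxB {f : (Fin n → Bool) → Bool} {b : Fin n → Option Bool} {i j k : Fin n}
    {c d : Bool} (hbi : b i = none) (hbj : b j = none) (hij : i ≠ j)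
    (hfix : ∀ x, Wit f b j x → x i = c)
    (hk : (k, d) ∈ Fx f b i) (hkj : k ≠ j) : (k, d) ∈ Fx f b j := by
  rw [mem_Fx] at hk ⊢
  refine ⟨hkj, hk.2.1, ?_⟩
  intro x hw
  obtain ⟨t, hwt⟩ := witA hbi hbj hij hfix hw
  have := hk.2.2 _ hwt
  rwa [Function.update_of_ne hkj] at this

end Aux2
section Aux3

variable {n : ℕ}

/-- A variable not relevant after pivoting has all its witnesses fixed. -/
lemma fixed_of_not_relAt {f : (Fin n → Bool) → Bool} {b : Fin n → Option Bool}
    {i j : Fin n} {v : Bool} (hbi : b i = none)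
    (hnr : ¬ RelAt f (Function.update b i (some v)) j) :
    ∀ x, Wit f b j x → x i = !v := by
  intro x hw
  by_contra hxi
  have hxiv : x i = v := by cases hv : x i <;> cases v <;> simp_all
  apply hnr
  refine ⟨x, ?_, hw.2⟩
  intro k w hk
  by_cases hki : k = i
  · subst hki
    rw [Function.update_self] at hk
    cases hk; exact hxiv
  · rw [Function.update_of_ne hki] at hk
    exact hw.1 k w hk

/-- Pivot lemma: some relevant variable can be set (to some value) keeping
all other relevant variables relevant. -/
lemma pivot {f : (Fin n → Bool) → Bool} {b : Fin n → Option Bool}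
    (hne : (Rset f b).Nonempty) :
    ∃ i ∈ Rset f b, ∃ v : Bool,
      ∀ j ∈ Rset f b, j ≠ i → RelAt f (Function.update b i (some v)) j := by
  obtain ⟨i, hiR, hmax⟩ := Finset.exists_max_image (Rset f b) (fun j => (Fx f b j).card) hne
  by_contra hcon
  push_neg at hcon
  have hbi : b i = none := (mem_Rset.mp hiR).1
  -- killers for both values
  obtain ⟨j, hjR, hji, hnrj⟩ := hcon i hiR false
  obtain ⟨j', hj'R, hj'i, hnrj'⟩ := hcon i hiR true
  have hfj : ∀ x, Wit f b j x → x i = true := by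
    have := fixed_of_not_relAt hbi hnrj; simpa using this
  have hfj' : ∀ x, Wit f b j' x → x i = false := by
    have := fixed_of_not_relAt hbi hnrj'; simpa using this
  have hbj : b j = none := (mem_Rset.mp hjR).1
  have hbj' : b j' = none := (mem_Rset.mp hj'R).1
  obtain ⟨xj, hxj⟩ := (mem_Rset.mp hjR).2
  obtain ⟨xj', hxj'⟩ := (mem_Rset.mp hj'R).2
  have hjj' : j ≠ j' := by
    rintro rfl
    have h1 := hfj xj hxj
    have h2 := hfj' xj hxj
    rw [h1] at h2; cases h2
  have hij : i ≠ j := fun h => hji h.symm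
  have hij' : i ≠ j' := fun h => hj'i h.symm
  -- Step 1: there is a j'-literal in Fx f b i
  have hstep1 : ∃ d', (j', d') ∈ Fx f b i := by
    by_contra hno
    push_neg at hno
    have hsub : Fx f b i ⊆ Fx f b j' := by
      rintro ⟨k, d⟩ hm
      have hkj' : k ≠ j' := by rintro rfl; exact hno d hm
      exact fxB hbi hbj' hij' hfj' hm hkj'
    have hmem : (i, false) ∈ Fx f b j' := mem_Fx.mpr ⟨hij', hbi, hfj'⟩
    have hnmem : (i, false) ∉ Fx f b i := by
      rw [mem_Fx]; rintro ⟨h, -⟩; exact h rfl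
    have hcard : (Fx f b i).card + 1 ≤ (Fx f b j').card := by
      have : insert (i, false) (Fx f b i) ⊆ Fx f b j' :=
        Finset.insert_subset hmem hsub
      have h2 := Finset.card_le_card this
      rwa [Finset.card_insert_of_notMem hnmem] at h2
    have := hmax j' hj'R
    omega
  obtain ⟨d', hd'⟩ := hstep1
  -- Step 2: transfer (j', d') into Fx f b j, then (i, false) into Fx f b j
  have h1 : (j', d') ∈ Fx f b j := fxB hbi hbj hij hfj hd' hjj'.symm
  have hfix2 : ∀ x, Wit f b j x → x j' = d' := (mem_Fx.mp h1).2.2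
  have h2 : (i, false) ∈ Fx f b j := by
    refine fxB hbj' hbj hjj'.symm hfix2 ?_ hij
    exact mem_Fx.mpr ⟨hij', hbi, hfj'⟩
  have hfalse := (mem_Fx.mp h2).2.2 xj hxj
  have htrue := hfj xj hxj
  rw [htrue] at hfalse; cases hfalse

end Aux3
section Aux4

variable {n : ℕ}

/-- Main lower-bound lemma: any goal function value exceeds the number of
free relevant variables plus the current value. -/
lemma goal_bound {f : (Fin n → Bool) → Bool} {g : (Fin n → Option Bool) → ℕ} {Q : ℕ}
    (hg : GoalFn f g Q) :
    ∀ m (b : Fin n → Option Bool), (Rset f b).card ≤ m → g b + (Rset f b).card ≤ Q := by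
  intro m
  induction m with
  | zero =>
    intro b hb
    have := g_le_Q hg b
    omega
  | succ m ih =>
    intro b hb
    by_cases hc : (Rset f b).card = 0
    · have := g_le_Q hg b; omega
    · have hne : (Rset f b).Nonempty := Finset.card_pos.mp (Nat.pos_of_ne_zero hc)
      obtain ⟨i, hiR, v, hall⟩ := pivot hne
      obtain ⟨hbi, hx⟩ := mem_Rset.mp hiR
      set b' := Function.update b i (some v) with hb'
      -- R b ⊆ insert i (R b')
      have hsub1 : Rset f b ⊆ insert i (Rset f b') := by
        intro j hj
        by_cases hji : j = i
        · subst hji; exact Finset.mem_insert_self _ _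
        · refine Finset.mem_insert_of_mem (mem_Rset.mpr ⟨?_, hall j hj hji⟩)
          rw [hb', Function.update_of_ne hji]
          exact (mem_Rset.mp hj).1
      -- R b' ⊆ (R b).erase i
      have hsub2 : Rset f b' ⊆ (Rset f b).erase i := by
        intro j hj
        obtain ⟨hb'j, xw, hxw⟩ := mem_Rset.mp hj
        have hji : j ≠ i := by
          rintro rfl
          rw [hb', Function.update_self] at hb'j; cases hb'j
        refine Finset.mem_erase.mpr ⟨hji, mem_Rset.mpr ⟨?_, ?_⟩⟩
        · rwa [hb', Function.update_of_ne hji] at hb'j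
        · exact ⟨xw, tExtends_of_extends (extends_update hbi _) hxw.1, hxw.2⟩
      have hcard2 : (Rset f b').card ≤ (Rset f b).card - 1 := by
        have := Finset.card_le_card hsub2
        rw [Finset.card_erase_of_mem hiR] at this
        exact this
      have hcard1 : (Rset f b).card ≤ (Rset f b').card + 1 := by
        have := Finset.card_le_card hsub1
        have h2 := Finset.card_insert_le i (Rset f b')
        omega
      -- marginal argument: g b + 1 ≤ g b'
      obtain ⟨x, hxt, hxd⟩ := hx
      set c : Fin n → Option Bool :=
        Function.update (fun k => (some (x k) : Option Bool)) i none with hcdef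
      have hcext : Extends c b := by
        intro k w hk
        have hki : k ≠ i := by rintro rfl; rw [hbi] at hk; cases hk
        rw [hcdef, Function.update_of_ne hki, hxt k w hk]
      have hci : c i = none := by rw [hcdef, Function.update_self]
      have hcfull : IsCert f (Function.update c i (some v)) := by
        apply isCert_of_full
        intro k
        by_cases hki : k = i
        · subst hki; rw [Function.update_self]; rfl
        · rw [Function.update_of_ne hki, hcdef, Function.update_of_ne hki]; rfl
      have hgcfull : g (Function.update c i (some v)) = Q := (hg.2.2 _).mpr hcfull
      have hcnotcert : ¬ IsCert f c := by
        intro hcert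
        apply hxd
        apply hcert
        · intro k w hk
          have hki : k ≠ i := by rintro rfl; rw [hci] at hk; cases hk
          rw [hcdef, Function.update_of_ne hki] at hk
          cases hk
          rw [Function.update_of_ne hki]
        · intro k w hk
          have hki : k ≠ i := by rintro rfl; rw [hci] at hk; cases hk
          rw [hcdef, Function.update_of_ne hki] at hk
          cases hk
          rw [Function.update_of_ne hki]
      have hgclt : g c < Q := by
        have hle := g_le_Q hg c
        have hne' : g c ≠ Q := fun h => hcnotcert ((hg.2.2 c).mp h)
        omega
      have hsm := hg.2.1 b c i v hcext hbi hci
      rw [hgcfull] at hsm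
      -- hsm : Q + g b ≤ g (update b i (some v)) + g c
      have hstep : g b + 1 ≤ g b' := by rw [hb']; omega
      have hih := ih b' (by omega)
      omega

end Aux4
/-- if `f` depends on exactly `n'` of its variables, then `Γ(f) ≥ n'`. -/
theorem stmt5 {n : ℕ} (f : (Fin n → Bool) → Bool) (n' : ℕ)
    (h : {i : Fin n | DependsOnVar f i}.ncard = n') :
    n' ≤ gamma f := by
  have hmem : gamma f ∈ {Q | ∃ g, GoalFn f g Q} :=
    Nat.sInf_mem ⟨(PAll f).card, g0 f, g0_goalFn f⟩
  obtain ⟨g, hg⟩ := hmem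
  have hR : Rset f (fun _ => none) = Finset.univ.filter fun i => DependsOnVar f i := by
    ext i
    rw [Finset.mem_filter, Rset, Finset.mem_filter]
    simp only [Rset, RelAt, Wit, DependsOnVar, Finset.mem_filter, Finset.mem_univ, true_and]
    constructor
    · rintro ⟨x, hw⟩
      exact ⟨x, hw.2⟩
    · rintro ⟨x, hx⟩
      refine ⟨x, ?_, hx⟩
      intro k v hk
      exact nomatch hk
  have hcard : (Rset f (fun _ => none)).card = n' := by
    rw [hR, ← h, ← Set.ncard_coe_finset]
    congr 1
    ext i
    simp
  have hb := goal_bound hg (Rset f (fun _ => none)).card (fun _ => none) le_rfl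
  omega
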